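/- Let Φ be the m×n synthesis operator of an equiangular tight frame (so ΦΦᵀ = (n/m)·I, the columns of Φ are unit norm, and |⟨φ_i,φ_j⟩| is constant over i ≠ j), with m < n. Let Φ̃ be any (n−m)×n real matrix whose rows are pairwise orthogonal, each of squared norm n/(n−m), and span the orthogonal complement of the row space of Φ. Then Φ̃ is the synthesis operator of an equiangular tight frame for ℝ^{n−m}, and the Gram matrices satisfy I = (m/n)·ΦᵀΦ + ((n−m)/n)·Φ̃ᵀΦ̃. -/

import Mathlib

open Matrix

/-- **Naimark complement.** Let `Φ` be the `m × n` synthesis operator of an ETF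
(`ΦΦᵀ = (n/m)·I`, unit-norm columns, equiangular) with `m < n`, and let `Ψ` be an
`(n-m) × n` matrix whose rows are pairwise orthogonal with squared norm `n/(n-m)`
(i.e. `ΨΨᵀ = (n/(n-m))·I`) and lie in (hence, by dimension count, span) the
orthogonal complement of the row space of `Φ` (i.e. `ΦΨᵀ = 0`).  Then `Ψ` is the
synthesis operator of an ETF for `ℝ^{n-m}` and
`I = (m/n)·ΦᵀΦ + ((n-m)/n)·ΨᵀΨ`. -/
theorem naimark_complement (m n : ℕ) (hm : 0 < m) (hmn : m < n)
    (Φ : Matrix (Fin m) (Fin n) ℝ)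
    (hunit : ∀ i, (Φᵀ * Φ) i i = 1)
    (htight : Φ * Φᵀ = ((n : ℝ) / m) • 1)
    (β : ℝ) (hβ : ∀ i j : Fin n, i ≠ j → |(Φᵀ * Φ) i j| = β)
    (Ψ : Matrix (Fin (n - m)) (Fin n) ℝ)
    (hrows : Ψ * Ψᵀ = ((n : ℝ) / ((n : ℝ) - m)) • 1)
    (hperp : Φ * Ψᵀ = 0) :
    (∀ i, (Ψᵀ * Ψ) i i = 1) ∧
      (∃ c : ℝ, ∀ i j : Fin n, i ≠ j → |(Ψᵀ * Ψ) i j| = c) ∧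
      (1 : Matrix (Fin n) (Fin n) ℝ) =
        ((m : ℝ) / n) • (Φᵀ * Φ) + (((n : ℝ) - m) / n) • (Ψᵀ * Ψ) := by
  have hn0 : (0:ℝ) < n := by exact_mod_cast hm.trans hmn
  have hm0 : (0:ℝ) < m := by exact_mod_cast hm
  have hnm0 : (0:ℝ) < (n:ℝ) - m := by
    have : (m:ℝ) < n := by exact_mod_cast hmn
    linarith
  set a : ℝ := (m:ℝ)/n with ha
  set b : ℝ := ((n:ℝ)-m)/n with hb
  have hperp' : Ψ * Φᵀ = 0 := by
    have := congrArg Matrix.transpose hperp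
    simpa [Matrix.transpose_mul] using this
  have key1 : fromRows (a • Φ) (b • Ψ) * fromCols Φᵀ Ψᵀ = 1 := by
    rw [fromRows_mul_fromCols, Matrix.smul_mul, Matrix.smul_mul, Matrix.smul_mul,
      Matrix.smul_mul, htight, hrows, hperp, hperp', smul_smul, smul_smul, smul_zero, smul_zero]
    have h1 : a * ((n:ℝ)/m) = 1 := by rw [ha]; field_simp
    have h2 : b * ((n:ℝ)/((n:ℝ)-m)) = 1 := by rw [hb]; field_simp
    rw [h1, h2, one_smul, one_smul, ← fromBlocks_one]
  have e : Fin n ≃ Fin m ⊕ Fin (n - m) :=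
    (finCongr (by omega : n = m + (n - m))).trans finSumFinEquiv.symm
  have key2 : fromCols Φᵀ Ψᵀ * fromRows (a • Φ) (b • Ψ) = 1 :=
    (fromCols_mul_fromRows_eq_one_comm e _ _ _ _).mpr key1
  rw [fromCols_mul_fromRows, Matrix.mul_smul, Matrix.mul_smul] at key2
  refine ⟨?_, ?_, key2.symm⟩
  · intro i
    have := congrFun (congrFun key2 i) i
    simp only [Matrix.add_apply, Matrix.smul_apply, Matrix.one_apply_eq, smul_eq_mul,
      hunit i] at this
    have hb0 : b ≠ 0 := by positivity
    rw [ha, hb] at this; field_simp at this ⊢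
    nlinarith [this]
  · refine ⟨(m:ℝ)/((n:ℝ)-m) * β, fun i j hij => ?_⟩
    have := congrFun (congrFun key2 i) j
    simp only [Matrix.add_apply, Matrix.smul_apply, smul_eq_mul,
      Matrix.one_apply_ne hij] at this
    have h : (Ψᵀ * Ψ) i j = -((m:ℝ)/((n:ℝ)-m)) * (Φᵀ * Φ) i j := by
      have hb0 : b ≠ 0 := by positivity
      rw [ha, hb] at this; field_simp at this
      field_simp
      linarith [this]
    rw [h, abs_mul, abs_neg, abs_div, hβ i j hij, abs_of_pos hnm0, abs_of_pos hm0]
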